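/- The Lobachevsky function Л(θ) = -∫_0^θ log|2 sin t| dt satisfies the distribution identity Л(nθ) = n Σ_{j=0}^{n-1} Л(θ + jπ/n) for every positive integer n and all real θ. -/

import Mathlib

open Real BigOperators Finset MeasureTheory Set

lemma aux_two_sin (w : ℂ) :
    2 * Complex.sin w = -Complex.I * Complex.exp (w * Complex.I) *
      (1 - Complex.exp (-2 * w * Complex.I)) := by
  have h : Complex.exp (w * Complex.I) * Complex.exp (-2 * w * Complex.I)
      = Complex.exp (-w * Complex.I) := by
    rw [← Complex.exp_add]; ring_nf
  rw [Complex.sin, ← h]; ring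

lemma aux_prod_roots (n : ℕ) (hn : 0 < n) (w : ℂ) :
    ∏ k ∈ range n, (1 - Complex.exp (-(2 * π * Complex.I / n)) ^ k * w) = 1 - w ^ n := by
  have hζ : IsPrimitiveRoot (Complex.exp (2 * π * Complex.I / n))⁻¹ n :=
    (Complex.isPrimitiveRoot_exp n hn.ne').inv
  have h := X_pow_sub_C_eq_prod hζ hn (rfl : w ^ n = w ^ n)
  have h2 := congrArg (Polynomial.eval 1) h
  simp only [Polynomial.eval_sub, Polynomial.eval_pow, Polynomial.eval_X, Polynomial.eval_C,
    Polynomial.eval_prod, one_pow] at h2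
  rw [← Complex.exp_neg] at h2
  exact h2.symm

lemma aux_neg_I_exp : Complex.exp (-(π/2) * Complex.I) = -Complex.I := by
  rw [Complex.exp_mul_I]
  simp [Real.cos_pi_div_two, Real.sin_pi_div_two]

lemma aux_prod_sin (n : ℕ) (hn : 0 < n) (z : ℂ) :
    ∏ k ∈ range n, (2 * Complex.sin (z + k * (π:ℂ) / n)) = 2 * Complex.sin (n * z) := by
  have hn' : (n:ℂ) ≠ 0 := Nat.cast_ne_zero.2 hn.ne'
  have key : ∀ k ∈ range n, 2 * Complex.sin (z + k * (π:ℂ) / n) =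
      (-Complex.I) * (Complex.exp ((z + k * (π:ℂ)/n) * Complex.I)) *
      (1 - Complex.exp (-(2*(π:ℂ)*Complex.I/n)) ^ k * Complex.exp (-2*z*Complex.I)) := by
    intro k _
    rw [aux_two_sin]
    congr 2
    rw [← Complex.exp_nat_mul, ← Complex.exp_add]
    congr 1
    field_simp
    ring
  rw [Finset.prod_congr rfl key, Finset.prod_mul_distrib, Finset.prod_mul_distrib,
      aux_prod_roots n hn, Finset.prod_const, card_range, ← Complex.exp_sum]
  have h1 : (∑ k ∈ range n, (k:ℂ)) = n * ((n:ℂ) - 1) / 2 := by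
    obtain ⟨m, rfl⟩ : ∃ m, n = m + 1 := ⟨n-1, (Nat.succ_pred_eq_of_pos hn).symm⟩
    have h0 := Finset.sum_range_id_mul_two (m+1)
    have h2 : ((∑ i ∈ range (m+1), (i:ℕ) : ℕ) : ℂ) * 2 = ((m:ℂ)+1) * m := by
      rw [Nat.add_sub_cancel] at h0
      exact_mod_cast congrArg (Nat.cast : ℕ → ℂ) h0
    push_cast at h2 ⊢
    linear_combination h2 / 2
  have hsum : (∑ k ∈ range n, (z + (k:ℂ) * π / n) * Complex.I)
      = (n*z) * Complex.I + ((n:ℂ) - 1) * (π/2) * Complex.I := by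
    rw [← Finset.sum_mul, Finset.sum_add_distrib, Finset.sum_const, card_range,
      ← Finset.sum_div, ← Finset.sum_mul, h1]
    field_simp
    ring
  have e1 : Complex.exp (-2*z*Complex.I)^n = Complex.exp (-2*((n:ℂ)*z)*Complex.I) := by
    rw [← Complex.exp_nat_mul]; ring_nf
  have e2 : (-Complex.I)^n * Complex.exp ((↑n*z)*Complex.I + ((n:ℂ)-1)*(π/2)*Complex.I)
      = -Complex.I * Complex.exp ((↑n*z)*Complex.I) := by
    rw [← aux_neg_I_exp, ← Complex.exp_nat_mul, ← Complex.exp_add, ← Complex.exp_add]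
    congr 1; ring
  rw [hsum, e1, e2, aux_two_sin]

lemma aux_log_int01 : IntervalIntegrable Real.log volume 0 1 := by
  rw [intervalIntegrable_iff_integrableOn_Ioc_of_le zero_le_one]
  have h := intervalIntegral.integrableOn_deriv_of_nonneg
      (g := fun x : ℝ => x - x * Real.log x) (g' := fun x : ℝ => -Real.log x) (a := 0) (b := 1)
      ((continuous_id.sub Real.continuous_mul_log).continuousOn)
      (fun x hx => by
        have h' : HasDerivAt (fun x : ℝ => x - x * Real.log x) (-Real.log x) x := by
          simpa using (hasDerivAt_id' x).fun_sub (Real.hasDerivAt_mul_log (ne_of_gt hx.1))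
        exact h')
      (fun x hx => by
        have := Real.log_nonpos hx.1.le hx.2.le
        linarith)
  exact h.neg.congr (Filter.Eventually.of_forall fun x => by simp)

lemma aux_log_int (b : ℝ) (hb : 0 < b) : IntervalIntegrable Real.log volume 0 b := by
  rcases le_total b 1 with h | h
  · exact aux_log_int01.mono_set (by rw [Set.uIcc_of_le hb.le, Set.uIcc_of_le zero_le_one]; exact Set.Icc_subset_Icc_right h)
  · exact aux_log_int01.trans (intervalIntegral.intervalIntegrable_log (by
      simp only [Set.mem_uIcc]
      push_neg
      constructor <;> intro <;> nlinarith))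

lemma aux_logsin_half : IntervalIntegrable (fun t => Real.log |Real.sin t|) volume 0 (π/2) := by
  have hpi := Real.pi_pos
  rw [intervalIntegrable_iff_integrableOn_Ioc_of_le (by positivity)]
  have hB : IntegrableOn (fun t : ℝ => |Real.log (2/π)| + |Real.log t|) (Ioc 0 (π/2)) volume := by
    refine (integrableOn_const ?_).add ?_
    · exact measure_Ioc_lt_top.ne
    · exact ((intervalIntegrable_iff_integrableOn_Ioc_of_le (by positivity)).1
        (aux_log_int (π/2) (by positivity))).abs
  refine MeasureTheory.Integrable.mono hB ?_ ?_
  · exact ((Real.measurable_log.comp (Real.continuous_sin.measurable.abs)).aestronglyMeasurable)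
  · filter_upwards [ae_restrict_mem measurableSet_Ioc] with t ht
    have h1 : 0 < Real.sin t :=
      Real.sin_pos_of_pos_of_lt_pi ht.1 (lt_of_le_of_lt ht.2 (by linarith))
    have h2 : Real.sin t ≤ 1 := Real.sin_le_one t
    have h3 : 2/π * t ≤ Real.sin t := Real.mul_le_sin ht.1.le ht.2
    have h4 : (0:ℝ) < 2/π * t := mul_pos (by positivity) ht.1
    have h5 : Real.log (2/π * t) ≤ Real.log (Real.sin t) := Real.log_le_log h4 h3
    have h6 : Real.log (2/π * t) = Real.log (2/π) + Real.log t :=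
      Real.log_mul (by positivity) (ne_of_gt ht.1)
    have h7 : Real.log (Real.sin t) ≤ 0 := Real.log_nonpos h1.le h2
    have key : -Real.log (Real.sin t) ≤ |Real.log (2/π)| + |Real.log t| := by
      have a1 := neg_abs_le (Real.log (2/π)); have a2 := neg_abs_le (Real.log t)
      linarith
    rw [abs_of_pos h1, Real.norm_eq_abs, Real.norm_eq_abs, abs_of_nonpos h7,
      abs_of_nonneg (by positivity : (0:ℝ) ≤ |Real.log (2/π)| + |Real.log t|)]
    exact key

lemma aux_logsin_pi : IntervalIntegrable (fun t => Real.log |Real.sin t|) volume 0 π := by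
  have hpi := Real.pi_pos
  refine aux_logsin_half.trans ?_
  have h := aux_logsin_half.comp_sub_left π
  have he : (fun x => Real.log |Real.sin (π - x)|) = fun t => Real.log |Real.sin t| := by
    funext x; rw [Real.sin_pi_sub]
  rw [he] at h
  rw [show π - π/2 = π/2 by ring] at h
  simpa using h.symm

lemma aux_g_periodic : Function.Periodic (fun t => Real.log |2 * Real.sin t|) π := by
  intro t
  simp only [Real.sin_add_pi]
  rw [show (2:ℝ) * -Real.sin t = -(2*Real.sin t) by ring, abs_neg]

lemma aux_sin_zero_null (c : ℝ) : volume {t : ℝ | Real.sin (t + c) = 0} = 0 := by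
  have hsub : {t : ℝ | Real.sin (t + c) = 0} ⊆ Set.range (fun k : ℤ => k * π - c) := by
    intro t ht
    obtain ⟨k, hk⟩ := Real.sin_eq_zero_iff.1 ht
    exact ⟨k, by simp only; linarith⟩
  exact measure_mono_null hsub ((Set.countable_range _).measure_zero _)

lemma aux_g_int_pi : IntervalIntegrable (fun t => Real.log |2 * Real.sin t|) volume 0 π := by
  have h : IntervalIntegrable (fun t => Real.log 2 + Real.log |Real.sin t|) volume 0 π :=
    intervalIntegrable_const.add aux_logsin_pi
  refine h.congr_ae ?_
  have h0 := aux_sin_zero_null 0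
  rw [MeasureTheory.measure_eq_zero_iff_ae_notMem] at h0
  refine ae_restrict_of_ae ?_
  filter_upwards [h0] with t ht
  simp only [Set.mem_setOf_eq, add_zero] at ht
  rw [abs_mul, Real.log_mul (by norm_num) (by simpa [abs_ne_zero] using ht)]
  norm_num

lemma aux_periodic_int {f : ℝ → ℝ} (hp : Function.Periodic f π)
    (h0 : IntervalIntegrable f volume 0 π) (a b : ℝ) : IntervalIntegrable f volume a b := by
  have hpi := Real.pi_pos
  have hk : ∀ k : ℤ, IntervalIntegrable f volume (k*π) (k*π + π) := by
    intro k
    have h2 := h0.comp_add_right (-(k*π))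
    have he : (fun x => f (x + -(k*π))) = f := by
      funext x
      rw [show x + -(k*π) = x - k*π by ring, hp.sub_int_mul_eq k]
    rw [he] at h2
    simpa [add_comm] using h2
  have hnat : ∀ (j : ℤ) (m : ℕ), IntervalIntegrable f volume (j*π) (j*π + m*π) := by
    intro j m
    induction m with
    | zero => simp
    | succ m ih =>
        refine ih.trans ?_
        have := hk (j + m)
        push_cast at this ⊢
        rw [show (↑j + ↑m) * π = j*π + m*π by ring] at this
        rw [show j*π + (↑m+1)*π = (j*π + ↑m*π) + π by ring]
        exact this
  have key : ∀ (j : ℤ) (k : ℤ), j ≤ k → IntervalIntegrable f volume (j*π) (k*π) := by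
    intro j k hjk
    obtain ⟨m, rfl⟩ := Int.le.dest hjk
    have := hnat j m
    rw [show ((j:ℝ)*π + (m:ℝ)*π) = ((j+(m:ℤ) : ℤ):ℝ)*π by push_cast; ring] at this
    exact this
  set j : ℤ := ⌊min a b / π⌋ with hjdef
  set k : ℤ := ⌈max a b / π⌉ with hkdef
  have hj : (j:ℝ)*π ≤ min a b := by
    have := Int.floor_le (min a b / π)
    calc (j:ℝ)*π ≤ (min a b / π) * π := by
          apply mul_le_mul_of_nonneg_right this hpi.le
      _ = min a b := by field_simp
  have hk2 : max a b ≤ (k:ℝ)*π := by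
    have := Int.le_ceil (max a b / π)
    calc max a b = (max a b / π) * π := by field_simp
      _ ≤ (k:ℝ)*π := mul_le_mul_of_nonneg_right this hpi.le
  have hjk : j ≤ k := by
    have h1 : (j:ℝ)*π ≤ (k:ℝ)*π := le_trans hj (le_trans (min_le_max) hk2)
    have h2 : (j:ℝ) ≤ (k:ℝ) := le_of_mul_le_mul_right (by linarith) hpi
    exact_mod_cast h2
  apply (key j k hjk).mono_set
  rw [Set.uIcc_subset_uIcc_iff_le]
  constructor
  · calc min ((j:ℝ)*π) ((k:ℝ)*π) ≤ (j:ℝ)*π := min_le_left _ _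
      _ ≤ min a b := hj
  · calc max a b ≤ (k:ℝ)*π := hk2
      _ ≤ max ((j:ℝ)*π) ((k:ℝ)*π) := le_max_right _ _

lemma aux_prod_sin_real (n : ℕ) (hn : 0 < n) (t : ℝ) :
    ∏ k ∈ range n, (2 * Real.sin (t + k * π / n)) = 2 * Real.sin (n * t) := by
  have h := aux_prod_sin n hn (t : ℂ)
  exact_mod_cast h

lemma aux_ae (n : ℕ) (hn : 0 < n) : ∀ᵐ t : ℝ, Real.log |2 * Real.sin ((n:ℝ) * t)|
    = ∑ k ∈ range n, Real.log |2 * Real.sin (t + k * π / n)| := by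
  have hnull : volume (⋃ k ∈ Finset.range n, {t : ℝ | Real.sin (t + k*π/n) = 0}) = 0 :=
    measure_iUnion_null fun k => measure_iUnion_null fun _ => aux_sin_zero_null _
  rw [MeasureTheory.measure_eq_zero_iff_ae_notMem] at hnull
  filter_upwards [hnull] with t ht
  simp only [Set.mem_iUnion, Set.mem_setOf_eq, not_exists] at ht
  rw [← aux_prod_sin_real n hn t, Finset.abs_prod, Real.log_prod]
  intro k hk
  rw [abs_ne_zero]
  exact mul_ne_zero two_ne_zero (ht k hk)

/-- The Lobachevsky function Л(θ) = -∫₀^θ log|2 sin t| dt. -/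
noncomputable def lob (θ : ℝ) : ℝ := -∫ t in (0 : ℝ)..θ, Real.log |2 * Real.sin t|

lemma aux_gint : ∀ a b : ℝ, IntervalIntegrable (fun t => Real.log |2 * Real.sin t|) volume a b :=
  aux_periodic_int aux_g_periodic aux_g_int_pi

lemma aux_gshift (d a b : ℝ) :
    IntervalIntegrable (fun x => Real.log |2 * Real.sin (x + d)|) volume a b := by
  simpa using (aux_gint (a+d) (b+d)).comp_add_right d

lemma aux_lob_zero : lob 0 = 0 := by simp [lob]

lemma aux_lob_neg (x : ℝ) : lob (-x) = -lob x := by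
  unfold lob
  have hfe : (fun t => Real.log |2*Real.sin (-t)|) = fun t => Real.log |2*Real.sin t| := by
    funext t
    rw [Real.sin_neg, show (2:ℝ)*-Real.sin t = -(2*Real.sin t) by ring, abs_neg]
  have h := intervalIntegral.integral_comp_neg (a := (0:ℝ)) (b := x)
    (fun t => Real.log |2*Real.sin t|)
  rw [hfe] at h
  rw [intervalIntegral.integral_symm (-0) (-x)] at h
  simp only [neg_zero] at h
  linarith

lemma aux_c_zero : ∫ t in (0:ℝ)..π, Real.log |2*Real.sin t| = 0 := by
  have hpi := Real.pi_pos
  have e1 : ∫ t in (0:ℝ)..π, Real.log |2*Real.sin (2*t)|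
      = (2:ℝ)⁻¹ * ∫ t in (0:ℝ)..(2*π), Real.log |2*Real.sin t| := by
    have := intervalIntegral.integral_comp_mul_left (a := (0:ℝ)) (b := π)
      (fun t => Real.log |2*Real.sin t|) (two_ne_zero (α := ℝ))
    simpa using this
  have e2 : ∫ t in (0:ℝ)..(2*π), Real.log |2*Real.sin t|
      = (∫ t in (0:ℝ)..π, Real.log |2*Real.sin t|)
        + ∫ t in (0:ℝ)..π, Real.log |2*Real.sin t| := by
    rw [← intervalIntegral.integral_add_adjacent_intervals (aux_gint 0 π) (aux_gint π (2*π))]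
    congr 1
    have hper := aux_g_periodic.intervalIntegral_add_eq π 0
    rw [zero_add] at hper
    rw [show (2:ℝ)*π = π + π by ring]
    exact hper
  have e3 : ∫ t in (0:ℝ)..π, Real.log |2*Real.sin (2*t)|
      = (∫ t in (0:ℝ)..π, Real.log |2*Real.sin t|)
        + ∫ t in (0:ℝ)..π, Real.log |2*Real.sin t| := by
    have hcongr : ∫ t in (0:ℝ)..π, Real.log |2*Real.sin (2*t)|
        = ∫ t in (0:ℝ)..π, (Real.log |2*Real.sin t| + Real.log |2*Real.sin (t + π/2)|) := by
      apply intervalIntegral.integral_congr_ae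
      filter_upwards [aux_ae 2 (by norm_num)] with t h2 _
      push_cast at h2
      rw [h2]
      norm_num [Finset.sum_range_succ]
    rw [hcongr, intervalIntegral.integral_add (aux_gint 0 π) (aux_gshift (π/2) 0 π)]
    congr 1
    rw [intervalIntegral.integral_comp_add_right (fun t => Real.log |2*Real.sin t|) (π/2),
      zero_add]
    have hper := aux_g_periodic.intervalIntegral_add_eq (π/2) 0
    rw [zero_add] at hper
    rw [show π + π/2 = π/2 + π by ring]
    exact hper
  have hfin := e3.symm.trans e1
  rw [e2] at hfin
  linarith

lemma aux_lob_periodic (x : ℝ) : lob (x + π) = lob x := by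
  unfold lob
  have h := intervalIntegral.integral_add_adjacent_intervals (aux_gint 0 x) (aux_gint x (x+π))
  have h2 : ∫ t in x..(x+π), Real.log |2*Real.sin t| = 0 := by
    rw [aux_g_periodic.intervalIntegral_add_eq x 0, zero_add]
    exact aux_c_zero
  rw [h2] at h
  rw [← h]
  ring

lemma aux_lob_pi_sub (x : ℝ) : lob (π - x) = -lob x := by
  rw [show π - x = -x + π by ring, aux_lob_periodic, aux_lob_neg]

lemma aux_S (n : ℕ) (hn : 0 < n) : ∑ k ∈ range n, lob ((k:ℝ)*π/n) = 0 := by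
  obtain ⟨m, rfl⟩ : ∃ m, n = m + 1 := ⟨n-1, (Nat.succ_pred_eq_of_pos hn).symm⟩
  rw [Finset.sum_range_succ']
  simp only [Nat.cast_zero, zero_mul, zero_div, aux_lob_zero, add_zero]
  have hm : ((m:ℝ)+1) ≠ 0 := by positivity
  have hterm : ∀ j ∈ range m, lob ((((m-1-j : ℕ) : ℝ) + 1)*π/((m:ℝ)+1))
      = -lob (((j:ℝ)+1)*π/((m:ℝ)+1)) := by
    intro j hj
    rw [Finset.mem_range] at hj
    have h1 : ((m-1-j : ℕ) : ℝ) = (m:ℝ) - 1 - j := by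
      have he : m - 1 - j = m - (1 + j) := by omega
      rw [he, Nat.cast_sub (by omega)]
      push_cast; ring
    rw [h1, show ((m:ℝ) - 1 - (j:ℝ) + 1)*π/((m:ℝ)+1)
        = π - (( j:ℝ)+1)*π/((m:ℝ)+1) by field_simp; ring]
    exact aux_lob_pi_sub _
  have hrefl := Finset.sum_range_reflect (fun k => lob (((k:ℝ)+1)*π/((m:ℝ)+1))) m
  have h2 : ∑ j ∈ range m, lob ((((m-1-j : ℕ) : ℝ)+1)*π/((m:ℝ)+1))
      = ∑ j ∈ range m, -(lob (((j:ℝ)+1)*π/((m:ℝ)+1))) := Finset.sum_congr rfl hterm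
  rw [h2, Finset.sum_neg_distrib] at hrefl
  have hgoal : ∑ k ∈ range m, lob ((((k+1) : ℕ) : ℝ)*π/(((m+1) : ℕ) : ℝ))
      = ∑ k ∈ range m, lob (((k:ℝ)+1)*π/((m:ℝ)+1)) := by
    apply Finset.sum_congr rfl
    intro k _
    push_cast
    ring_nf
  rw [hgoal]
  linarith

/-- the distribution identity Л(nθ) = n Σ_{j=0}^{n-1} Л(θ + jπ/n)
for every positive integer n and all real θ. -/
theorem stmt13 (n : ℕ) (hn : 0 < n) (θ : ℝ) :
    lob (n * θ) = n * ∑ j ∈ Finset.range n, lob (θ + j * π / n) := by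
  have hn' : (n:ℝ) ≠ 0 := Nat.cast_ne_zero.2 hn.ne'
  have h1 : ∫ x in (0:ℝ)..θ, Real.log |2*Real.sin ((n:ℝ)*x)|
      = (n:ℝ)⁻¹ * ∫ t in (0:ℝ)..((n:ℝ)*θ), Real.log |2*Real.sin t| := by
    have := intervalIntegral.integral_comp_mul_left (a := (0:ℝ)) (b := θ)
      (fun t => Real.log |2*Real.sin t|) hn'
    simpa using this
  have h2 : ∫ x in (0:ℝ)..θ, Real.log |2*Real.sin ((n:ℝ)*x)|
      = ∫ x in (0:ℝ)..θ, (∑ j ∈ range n, Real.log |2*Real.sin (x + j*π/n)|) := by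
    apply intervalIntegral.integral_congr_ae
    filter_upwards [aux_ae n hn] with x hx _
    exact hx
  have h3 : ∫ x in (0:ℝ)..θ, (∑ j ∈ range n, Real.log |2*Real.sin (x + j*π/n)|)
      = ∑ j ∈ range n, ∫ x in (0:ℝ)..θ, Real.log |2*Real.sin (x + j*π/n)| :=
    intervalIntegral.integral_finset_sum (fun j _ => aux_gshift _ 0 θ)
  have h4 : ∀ j : ℕ, (∫ x in (0:ℝ)..θ, Real.log |2*Real.sin (x + (j:ℝ)*π/n)|)
      = -lob (θ + j*π/n) + lob ((j:ℝ)*π/n) := by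
    intro j
    rw [intervalIntegral.integral_comp_add_right (fun t => Real.log |2*Real.sin t|)
      ((j:ℝ)*π/n), zero_add]
    rw [← intervalIntegral.integral_interval_sub_left (aux_gint 0 (θ + (j:ℝ)*π/n))
      (aux_gint 0 ((j:ℝ)*π/n))]
    unfold lob
    ring
  have hS := aux_S n hn
  have hmain : lob ((n:ℝ)*θ) = -((n:ℝ) * ∫ x in (0:ℝ)..θ, Real.log |2*Real.sin ((n:ℝ)*x)|) := by
    unfold lob
    rw [h1]
    field_simp
  rw [hmain, h2, h3, Finset.sum_congr rfl (fun j _ => h4 j), Finset.sum_add_distrib,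
    Finset.sum_neg_distrib, hS]
  ring
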